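/- For 0 ≤ j ≤ r−1 and 0 ≤ k ≤ n−j−2, the polynomial R_j(z) := −Q_n^j(z) π_n(z) + P_n^j(z) · (−2πi κ_{n-1}² π_{n-1}(z)) satisfies ∫_ℝ R_j(x) π_k(x) e^{-V(x)} dx = 0. -/
import Mathlib


open MeasureTheory Polynomial

noncomputable section

/-- The coefficient `b_j` of `z^{n-j}` in `π_n`. -/
def bcoef (n : ℕ) (p : ℕ → Polynomial ℝ) (j : ℕ) : ℂ :=
  if j ≤ n then (((p n).coeff (n - j) : ℝ) : ℂ) else 0

/-- The coefficient `c_j` of `z^{n-j}` in `−2πi κ_{n-1}² π_{n-1}`. -/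
def ccoef (n : ℕ) (p : ℕ → Polynomial ℝ) (κ : ℕ → ℝ) (j : ℕ) : ℂ :=
  if j ≤ n then
    -(2 * Real.pi * Complex.I) * ((κ (n - 1) : ℝ) : ℂ) ^ 2 * (((p (n - 1)).coeff (n - j) : ℝ) : ℂ)
  else 0

/-- The truncation `b_0 z^j + b_1 z^{j-1} + ⋯ + b_j` of a coefficient sequence. -/
def Ptrunc (b : ℕ → ℂ) (j : ℕ) (z : ℂ) : ℂ :=
  ∑ m ∈ Finset.range (j + 1), b m * z ^ (j - m)

/-- The polynomial `R_j(z) = −Q_n^j(z) π_n(z) + P_n^j(z) · (−2πi κ_{n-1}² π_{n-1}(z))`. -/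
def Rfun (n : ℕ) (p : ℕ → Polynomial ℝ) (κ : ℕ → ℝ) (j : ℕ) (z : ℂ) : ℂ :=
  -(Ptrunc (ccoef n p κ) j z) * Polynomial.aeval z (p n) +
    Ptrunc (bcoef n p) j z *
      (-(2 * Real.pi * Complex.I) * ((κ (n - 1) : ℝ) : ℂ) ^ 2 * Polynomial.aeval z (p (n - 1)))

/-- For `0 ≤ j ≤ r−1` and `0 ≤ k ≤ n−j−2`, the polynomial
`R_j = −Q_n^j π_n + P_n^j (−2πi κ_{n-1}² π_{n-1})` is orthogonal to `π_k`. -/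
theorem R_orthogonal_to_low_degree
    (n r : ℕ) (hr : 1 ≤ r) (hnr : r ≤ n)
    (V : ℝ → ℝ) (hV : Continuous V)
    (hVint : ∀ k : ℕ, MeasureTheory.Integrable (fun x : ℝ => |x| ^ k * Real.exp (-V x)))
    (p : ℕ → Polynomial ℝ)
    (hmonic : ∀ k, (p k).Monic)
    (hdeg : ∀ k, (p k).natDegree = k)
    (horth : ∀ k m, k ≠ m → ∫ x : ℝ, (p k).eval x * (p m).eval x * Real.exp (-V x) = 0)
    (κ : ℕ → ℝ) (hκpos : ∀ k, 0 < κ k)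
    (hκ : ∀ k, ∫ x : ℝ, ((p k).eval x) ^ 2 * Real.exp (-V x) = ((κ k) ^ 2)⁻¹)
    (j k : ℕ) (hj : j ≤ r - 1) (hk : (k : ℤ) ≤ (n : ℤ) - j - 2) :
    ∫ x : ℝ, Rfun n p κ j (x : ℂ) * (((p k).eval x : ℝ) : ℂ) * ((Real.exp (-V x) : ℝ) : ℂ)
      = 0 := by
  classical
  have hcontE : Continuous fun x : ℝ => Real.exp (-V x) :=
    Real.continuous_exp.comp hV.neg
  -- integrability of polynomial × weight
  have intQ : ∀ Q : Polynomial ℝ,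
      Integrable (fun x : ℝ => Q.eval x * Real.exp (-V x)) := by
    intro Q
    have hrw : (fun x : ℝ => Q.eval x * Real.exp (-V x)) =
        fun x : ℝ => ∑ i ∈ Finset.range (Q.natDegree + 1),
          Q.coeff i * x ^ i * Real.exp (-V x) := by
      funext x
      rw [Polynomial.eval_eq_sum_range, Finset.sum_mul]
    rw [hrw]
    refine integrable_finset_sum _ (fun i _ => ?_)
    have hcont : Continuous (fun x : ℝ => Q.coeff i * x ^ i * Real.exp (-V x)) := by
      continuity
    refine ((hVint i).const_mul |Q.coeff i|).mono' hcont.aestronglyMeasurable ?_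
    filter_upwards with x
    rw [Real.norm_eq_abs, abs_mul, abs_mul, abs_pow, Real.abs_exp]
    ring_nf
    exact le_refl _
  -- orthogonality to monomials of lower degree
  have horthX : ∀ a : ℕ, ∀ N : ℕ, a < N →
      ∫ x : ℝ, (Polynomial.X ^ a * p N).eval x * Real.exp (-V x) = 0 := by
    intro a
    induction a using Nat.strong_induction_on with
    | _ a ih =>
      intro N haN
      set q : Polynomial ℝ := p a - Polynomial.X ^ a with hqdef
      have hdq : q.degree < (a : ℕ) := by
        have h1 : (p a).degree = (a : ℕ) := by
          rw [Polynomial.degree_eq_natDegree (hmonic a).ne_zero, hdeg a]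
        have h2 : (Polynomial.X ^ a : Polynomial ℝ).degree = (a : ℕ) :=
          Polynomial.degree_X_pow a
        have := Polynomial.degree_sub_lt (h1.trans h2.symm) (hmonic a).ne_zero
          (by rw [(hmonic a).leadingCoeff, Polynomial.monic_X_pow a |>.leadingCoeff])
        rwa [h1] at this
      have hndq : q.natDegree < a + 1 := by
        have : q.degree ≤ (a : ℕ) := le_of_lt hdq
        exact Nat.lt_succ_of_le (Polynomial.natDegree_le_iff_degree_le.mpr this)
      -- key: ∫ q * p N = 0
      have hq0 : ∫ x : ℝ, q.eval x * (p N).eval x * Real.exp (-V x) = 0 := by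
        have hrw : (fun x : ℝ => q.eval x * (p N).eval x * Real.exp (-V x)) =
            fun x : ℝ => ∑ i ∈ Finset.range (a + 1),
              q.coeff i * ((Polynomial.X ^ i * p N).eval x * Real.exp (-V x)) := by
          funext x
          rw [Polynomial.eval_eq_sum_range' hndq]
          rw [Finset.sum_mul, Finset.sum_mul]
          refine Finset.sum_congr rfl (fun i _ => ?_)
          simp [Polynomial.eval_mul, Polynomial.eval_pow]
          ring
        rw [hrw, integral_finset_sum _ (fun i _ => ((intQ _).const_mul _))]
        refine Finset.sum_eq_zero (fun i hi => ?_)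
        rw [integral_const_mul]
        by_cases hia : i < a
        · rw [ih i hia N (hia.trans haN), mul_zero]
        · have : q.coeff i = 0 :=
            Polynomial.coeff_eq_zero_of_degree_lt
              (lt_of_lt_of_le hdq (by exact_mod_cast Nat.le_of_not_lt hia))
          rw [this, zero_mul]
      have hpa0 : ∫ x : ℝ, (p a).eval x * (p N).eval x * Real.exp (-V x) = 0 :=
        horth a N (Nat.ne_of_lt haN)
      have hrw2 : (fun x : ℝ => (Polynomial.X ^ a * p N).eval x * Real.exp (-V x)) =
          fun x : ℝ => (p a).eval x * (p N).eval x * Real.exp (-V x)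
            - q.eval x * (p N).eval x * Real.exp (-V x) := by
        funext x
        simp [hqdef, Polynomial.eval_mul, Polynomial.eval_pow, Polynomial.eval_sub]
        ring
      have hint1 : Integrable (fun x : ℝ => (p a).eval x * (p N).eval x * Real.exp (-V x)) := by
        have := intQ (p a * p N)
        simpa [Polynomial.eval_mul] using this
      have hint2 : Integrable (fun x : ℝ => q.eval x * (p N).eval x * Real.exp (-V x)) := by
        have := intQ (q * p N)
        simpa [Polynomial.eval_mul] using this
      rw [hrw2, integral_sub hint1 hint2, hpa0, hq0, sub_zero]
  -- orthogonality to any polynomial of degree < N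
  have horthQ : ∀ N : ℕ, ∀ q : Polynomial ℝ, q.natDegree < N →
      ∫ x : ℝ, (q * p N).eval x * Real.exp (-V x) = 0 := by
    intro N q hqN
    have hrw : (fun x : ℝ => (q * p N).eval x * Real.exp (-V x)) =
        fun x : ℝ => ∑ i ∈ Finset.range (q.natDegree + 1),
          q.coeff i * ((Polynomial.X ^ i * p N).eval x * Real.exp (-V x)) := by
      funext x
      rw [Polynomial.eval_mul, Polynomial.eval_eq_sum_range, Finset.sum_mul, Finset.sum_mul]
      refine Finset.sum_congr rfl (fun i _ => ?_)
      simp [Polynomial.eval_mul, Polynomial.eval_pow]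
      ring
    rw [hrw, integral_finset_sum _ (fun i _ => ((intQ _).const_mul _))]
    refine Finset.sum_eq_zero (fun i hi => ?_)
    rw [integral_const_mul, horthX i N (lt_of_le_of_lt (Nat.lt_succ_iff.mp
      (Finset.mem_range.mp hi)) hqN), mul_zero]
  -- arithmetic
  have hjn : j ≤ n := le_trans hj (le_trans (Nat.sub_le r 1) hnr)
  have hjk : j + k + 2 ≤ n := by omega
  -- constants
  set C0 : ℂ := -(2 * Real.pi * Complex.I) * ((κ (n - 1) : ℝ) : ℂ) ^ 2 with hC0
  -- the real summand functions
  set g : ℕ → ℝ → ℝ := fun m x =>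
    (-((p (n - 1)).coeff (n - m)) * ((Polynomial.X ^ (j - m) * p k) * p n).eval x
      + (p n).coeff (n - m) * ((Polynomial.X ^ (j - m) * p k) * p (n - 1)).eval x)
      * Real.exp (-V x) with hg
  have hgint : ∀ m, Integrable (g m) := by
    intro m
    have : g m = fun x =>
        (-((p (n - 1)).coeff (n - m))) *
          (((Polynomial.X ^ (j - m) * p k) * p n).eval x * Real.exp (-V x))
        + ((p n).coeff (n - m)) *
          (((Polynomial.X ^ (j - m) * p k) * p (n - 1)).eval x * Real.exp (-V x)) := by
      funext x; simp [hg]; ring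
    rw [this]
    exact ((intQ _).const_mul _).add ((intQ _).const_mul _)
  have hgzero : ∀ m, ∫ x : ℝ, g m x = 0 := by
    intro m
    have hdegq : (Polynomial.X ^ (j - m) * p k).natDegree = (j - m) + k := by
      rw [Polynomial.natDegree_mul (pow_ne_zero _ Polynomial.X_ne_zero) (hmonic k).ne_zero,
        Polynomial.natDegree_X_pow, hdeg k]
    have h1 : (Polynomial.X ^ (j - m) * p k).natDegree < n := by
      rw [hdegq]; omega
    have h2 : (Polynomial.X ^ (j - m) * p k).natDegree < n - 1 := by
      rw [hdegq]; omega
    have : g m = fun x =>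
        (-((p (n - 1)).coeff (n - m))) *
          (((Polynomial.X ^ (j - m) * p k) * p n).eval x * Real.exp (-V x))
        + ((p n).coeff (n - m)) *
          (((Polynomial.X ^ (j - m) * p k) * p (n - 1)).eval x * Real.exp (-V x)) := by
      funext x; simp [hg]; ring
    rw [this, integral_add ((intQ _).const_mul _) ((intQ _).const_mul _),
      integral_const_mul, integral_const_mul, horthQ n _ h1, horthQ (n - 1) _ h2,
      mul_zero, mul_zero, add_zero]
  -- pointwise identity
  have hpt : ∀ x : ℝ,
      Rfun n p κ j (x : ℂ) * (((p k).eval x : ℝ) : ℂ) * ((Real.exp (-V x) : ℝ) : ℂ)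
        = ∑ m ∈ Finset.range (j + 1), C0 * ((g m x : ℝ) : ℂ) := by
    intro x
    have haev : ∀ N : ℕ, Polynomial.aeval (x : ℂ) (p N) = (((p N).eval x : ℝ) : ℂ) := by
      intro N
      have := Polynomial.aeval_algebraMap_apply_eq_algebraMap_eval (A := ℂ) x (p N)
      simpa using this
    rw [Rfun, Ptrunc, Ptrunc, haev, haev]
    have hcc : ∀ m ∈ Finset.range (j + 1),
        ccoef n p κ m * (x : ℂ) ^ (j - m)
          = C0 * (((p (n - 1)).coeff (n - m) : ℝ) : ℂ) * (x : ℂ) ^ (j - m) := by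
      intro m hm
      rw [ccoef, if_pos (le_trans (Nat.lt_succ_iff.mp (Finset.mem_range.mp hm)) hjn)]
    have hbb : ∀ m ∈ Finset.range (j + 1),
        bcoef n p m * (x : ℂ) ^ (j - m)
          = (((p n).coeff (n - m) : ℝ) : ℂ) * (x : ℂ) ^ (j - m) := by
      intro m hm
      rw [bcoef, if_pos (le_trans (Nat.lt_succ_iff.mp (Finset.mem_range.mp hm)) hjn)]
    rw [Finset.sum_congr rfl hcc, Finset.sum_congr rfl hbb, ← hC0]
    have hgc : ∀ m ∈ Finset.range (j + 1), C0 * ((g m x : ℝ) : ℂ) =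
        C0 * ((-(((p (n - 1)).coeff (n - m) : ℝ) : ℂ) *
            ((x : ℂ) ^ (j - m) * (((p k).eval x : ℝ) : ℂ) * (((p n).eval x : ℝ) : ℂ))
          + (((p n).coeff (n - m) : ℝ) : ℂ) *
            ((x : ℂ) ^ (j - m) * (((p k).eval x : ℝ) : ℂ) * (((p (n - 1)).eval x : ℝ) : ℂ)))
          * ((Real.exp (-V x) : ℝ) : ℂ)) := by
      intro m hm
      congr 1
      simp only [hg]
      push_cast [Polynomial.eval_mul, Polynomial.eval_pow, Polynomial.eval_X]
      ring
    rw [Finset.sum_congr rfl hgc]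
    rw [neg_mul_comm, add_mul, add_mul, Finset.sum_mul, Finset.sum_mul, Finset.sum_mul,
      Finset.sum_mul, Finset.sum_mul, Finset.sum_mul, ← Finset.sum_add_distrib]
    refine Finset.sum_congr rfl (fun m hm => ?_)
    ring
  calc ∫ x : ℝ, Rfun n p κ j (x : ℂ) * (((p k).eval x : ℝ) : ℂ)
          * ((Real.exp (-V x) : ℝ) : ℂ)
      = ∫ x : ℝ, ∑ m ∈ Finset.range (j + 1), C0 * ((g m x : ℝ) : ℂ) := by
        refine integral_congr_ae (Filter.Eventually.of_forall (fun x => hpt x))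
    _ = ∑ m ∈ Finset.range (j + 1), ∫ x : ℝ, C0 * ((g m x : ℝ) : ℂ) := by
        refine integral_finset_sum _ (fun m _ => ?_)
        exact ((hgint m).ofReal).const_mul C0
    _ = 0 := by
        refine Finset.sum_eq_zero (fun m _ => ?_)
        rw [integral_const_mul]
        have hcast : ∫ (a : ℝ), ((g m a : ℝ) : ℂ) = ((∫ a : ℝ, g m a : ℝ) : ℂ) :=
          integral_ofReal
        rw [hcast, hgzero m]
        simp

end
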